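/- (Adaptive composition of tail-bound guarantees) Let X, Y, Z be finite random variables. Suppose P_Y{ y : ℓ(X→y) ≤ ε₁ } ≥ 1−δ₁, and for each y ∈ supp(P_Y), P_{Z|Y=y}{ z : ℓ(X→z|y) ≤ ε₂ } ≥ 1−δ₂. Then P_{YZ}{ (y,z) : ℓ(X→(y,z)) ≤ ε₁+ε₂ } ≥ 1 − (δ₁ + δ₂ − δ₁δ₂). -/
import Mathlib


/-- Adaptive composition of (ε,δ)-PML guarantees: the composed mechanism satisfies
(ε₁+ε₂, δ₁+δ₂−δ₁δ₂)-PML. -/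
theorem stmt_11 {α β γ : Type*} [Fintype α] [Fintype β] [Fintype γ]
    (p : α → β → γ → ℝ)
    (hp : ∀ x y z, 0 ≤ p x y z)
    (hsum : ∑ x, ∑ y, ∑ z, p x y z = 1)
    (pX : α → ℝ) (hpX : ∀ x, pX x = ∑ y, ∑ z, p x y z)
    (pY : β → ℝ) (hpY : ∀ y, pY y = ∑ x, ∑ z, p x y z)
    (pXY : α → β → ℝ) (hpXY : ∀ x y, pXY x y = ∑ z, p x y z)
    (pYZ : β → γ → ℝ) (hpYZ : ∀ y z, pYZ y z = ∑ x, p x y z)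
    (sX : Finset α) (hsX : ∀ x, x ∈ sX ↔ 0 < pX x) (hneX : sX.Nonempty)
    (sXY : β → Finset α) (hsXY : ∀ y x, x ∈ sXY y ↔ 0 < pXY x y)
    (hneXY : ∀ y, 0 < pY y → (sXY y).Nonempty)
    (ε₁ ε₂ : ℝ) (hε₁ : 0 ≤ ε₁) (hε₂ : 0 ≤ ε₂)
    (δ₁ δ₂ : ℝ) (hδ₁ : 0 ≤ δ₁ ∧ δ₁ ≤ 1) (hδ₂ : 0 ≤ δ₂ ∧ δ₂ ≤ 1)
    (GY : Finset β)
    (hGY : ∀ y, y ∈ GY ↔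
      Real.log (sX.sup' hneX fun x => pXY x y / (pX x * pY y)) ≤ ε₁)
    (h1 : 1 - δ₁ ≤ ∑ y ∈ GY, pY y)
    (GZ : β → Finset γ)
    (hGZ : ∀ y, ∀ hy : 0 < pY y, ∀ z, z ∈ GZ y ↔
      Real.log ((sXY y).sup' (hneXY y hy) fun x =>
        p x y z * pY y / (pXY x y * pYZ y z)) ≤ ε₂)
    (h2 : ∀ y, 0 < pY y → 1 - δ₂ ≤ ∑ z ∈ GZ y, pYZ y z / pY y)
    (GYZ : Finset (β × γ))
    (hGYZ : ∀ q : β × γ, q ∈ GYZ ↔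
      Real.log (sX.sup' hneX fun x => p x q.1 q.2 / (pX x * pYZ q.1 q.2)) ≤ ε₁ + ε₂) :
    1 - (δ₁ + δ₂ - δ₁ * δ₂) ≤ ∑ q ∈ GYZ, pYZ q.1 q.2 := by
  classical
  have hexp : ∀ a ε : ℝ, Real.log a ≤ ε → a ≤ Real.exp ε := by
    intro a ε h
    rcases le_or_gt a 0 with h0 | h0
    · exact h0.trans (Real.exp_pos ε).le
    · rwa [← Real.log_le_iff_le_exp h0]
  have hpX0 : ∀ x, 0 ≤ pX x := fun x => by
    rw [hpX]; exact Finset.sum_nonneg fun y _ => Finset.sum_nonneg fun z _ => hp x y z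
  have hpY0 : ∀ y, 0 ≤ pY y := fun y => by
    rw [hpY]; exact Finset.sum_nonneg fun x _ => Finset.sum_nonneg fun z _ => hp x y z
  have hpXY0 : ∀ x y, 0 ≤ pXY x y := fun x y => by
    rw [hpXY]; exact Finset.sum_nonneg fun z _ => hp x y z
  have hpYZ0 : ∀ y z, 0 ≤ pYZ y z := fun y z => by
    rw [hpYZ]; exact Finset.sum_nonneg fun x _ => hp x y z
  have hple : ∀ x y z, p x y z ≤ pXY x y := fun x y z => by
    rw [hpXY]; exact Finset.single_le_sum (fun z _ => hp x y z) (Finset.mem_univ z)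
  -- key membership lemma
  have key : ∀ y ∈ GY, ∀ hy : 0 < pY y, ∀ z ∈ GZ y, (y, z) ∈ GYZ := by
    intro y hyG hy z hz
    rw [hGYZ]
    have h1' := (hGY y).mp hyG
    have h2' := ((hGZ y hy z).mp hz)
    have e1 : ∀ x ∈ sX, pXY x y / (pX x * pY y) ≤ Real.exp ε₁ := fun x hx =>
      le_trans (Finset.le_sup' (fun x => pXY x y / (pX x * pY y)) hx) (hexp _ _ h1')
    have e2 : ∀ x ∈ sXY y, p x y z * pY y / (pXY x y * pYZ y z) ≤ Real.exp ε₂ := fun x hx =>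
      le_trans (Finset.le_sup' (fun x => p x y z * pY y / (pXY x y * pYZ y z)) hx) (hexp _ _ h2')
    have key2 : ∀ x ∈ sX, p x y z / (pX x * pYZ y z) ≤ Real.exp (ε₁ + ε₂) := by
      intro x hx
      have hxpos : 0 < pX x := (hsX x).mp hx
      rcases eq_or_lt_of_le (hpXY0 x y) with hXY | hXY
      · have hz0 : p x y z = 0 := le_antisymm ((hple x y z).trans hXY.symm.le) (hp x y z)
        rw [hz0, zero_div]
        exact (Real.exp_pos _).le
      rcases eq_or_lt_of_le (hpYZ0 y z) with hYZ | hYZ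
      · rw [← hYZ, mul_zero, div_zero]
        exact (Real.exp_pos _).le
      have hx' : x ∈ sXY y := (hsXY y x).mpr hXY
      have A := e1 x hx
      have B := e2 x hx'
      rw [div_le_iff₀ (by positivity)] at A B ⊢
      rw [Real.exp_add]
      have hB' : p x y z * pY y ≤ Real.exp ε₂ * (pXY x y * pYZ y z) := by linarith [B]
      have hA' : Real.exp ε₂ * pYZ y z * pXY x y ≤
          Real.exp ε₂ * pYZ y z * (Real.exp ε₁ * (pX x * pY y)) :=
        mul_le_mul_of_nonneg_left A (by positivity)
      have hC : p x y z * pY y ≤ Real.exp ε₁ * Real.exp ε₂ * (pX x * pYZ y z) * pY y := by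
        nlinarith [hB', hA']
      exact le_of_mul_le_mul_right hC hy
    have hsup : sX.sup' hneX (fun x => p x y z / (pX x * pYZ y z)) ≤ Real.exp (ε₁ + ε₂) :=
      Finset.sup'_le _ _ key2
    obtain ⟨x0, hx0⟩ := id hneX
    have h0 : 0 ≤ sX.sup' hneX (fun x => p x y z / (pX x * pYZ y z)) :=
      le_trans (div_nonneg (hp x0 y z) (mul_nonneg (hpX0 x0) (hpYZ0 y z)))
        (Finset.le_sup' (fun x => p x y z / (pX x * pYZ y z)) hx0)
    rcases eq_or_lt_of_le h0 with h0' | h0'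
    · rw [← h0', Real.log_zero]; linarith
    · rw [Real.log_le_iff_le_exp h0']; exact hsup
  -- sum chain
  set GY' := GY.filter (fun y => 0 < pY y) with hGY'
  have hT : GY'.biUnion (fun y => (GZ y).image (fun z => (y, z))) ⊆ GYZ := by
    intro q hq
    simp only [Finset.mem_biUnion, Finset.mem_image] at hq
    obtain ⟨y, hy, z, hz, rfl⟩ := hq
    rw [hGY', Finset.mem_filter] at hy
    exact key y hy.1 hy.2 z hz
  have hdisj : (GY' : Set β).PairwiseDisjoint (fun y => (GZ y).image (fun z => (y, z))) := by
    intro y1 _ y2 _ hne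
    simp only [Finset.disjoint_left, Finset.mem_image]
    rintro q ⟨z1, _, rfl⟩ ⟨z2, _, h⟩
    exact hne (congrArg Prod.fst h).symm
  have e3 : ∑ q ∈ GY'.biUnion (fun y => (GZ y).image (fun z => (y, z))), pYZ q.1 q.2
      = ∑ y ∈ GY', ∑ z ∈ GZ y, pYZ y z := by
    rw [Finset.sum_biUnion hdisj]
    refine Finset.sum_congr rfl fun y _ => ?_
    rw [Finset.sum_image]
    intro a _ b _ h
    exact (Prod.mk.injEq _ _ _ _).mp h |>.2
  have main : ∑ y ∈ GY', ∑ z ∈ GZ y, pYZ y z ≤ ∑ q ∈ GYZ, pYZ q.1 q.2 := by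
    rw [← e3]
    exact Finset.sum_le_sum_of_subset_of_nonneg hT (fun q _ _ => hpYZ0 q.1 q.2)
  have step2 : ∀ y ∈ GY', (1 - δ₂) * pY y ≤ ∑ z ∈ GZ y, pYZ y z := by
    intro y hy
    rw [hGY', Finset.mem_filter] at hy
    have h2' := h2 y hy.2
    rw [← Finset.sum_div, le_div_iff₀ hy.2] at h2'
    exact h2'
  have step3 : (1 - δ₂) * ∑ y ∈ GY', pY y ≤ ∑ y ∈ GY', ∑ z ∈ GZ y, pYZ y z := by
    rw [Finset.mul_sum]
    exact Finset.sum_le_sum step2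
  have hfe : ∑ y ∈ GY', pY y = ∑ y ∈ GY, pY y := by
    rw [hGY']
    exact Finset.sum_filter_of_ne fun y _ h => lt_of_le_of_ne (hpY0 y) (Ne.symm h)
  have hfinal : (1 - δ₂) * (1 - δ₁) ≤ (1 - δ₂) * ∑ y ∈ GY', pY y := by
    rw [hfe]
    exact mul_le_mul_of_nonneg_left h1 (by linarith [hδ₂.2])
  nlinarith [main, step3, hfinal]
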